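/- Let W be a tournament kernel on a probability space (S, μ), let Z be the associated collection of sets, and let A be an atom of (S, σ(Z), μ). Then the restriction W|_A : A × A → [0,1], regarded as a tournament kernel on the probability space (A, μ(· ∩ A)/μ(A)), is irreducible. -/

import Mathlib

open MeasureTheory

/-- A tournament kernel on a probability space `(S, μ)`. -/
def IsTournamentKernel {S : Type*} [MeasurableSpace S] (μ : Measure S)
    (W : S → S → ℝ) : Prop :=
  Measurable (Function.uncurry W) ∧ (∀ x y : S, 0 ≤ W x y ∧ W x y ≤ 1) ∧
  (∀ᵐ p ∂(μ.prod μ), W p.1 p.2 + W p.2 p.1 = 1)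

/-- `A ≺ B`: `W = 1` almost everywhere on `A × B`. -/
def KPrec {S : Type*} [MeasurableSpace S] (μ : Measure S) (W : S → S → ℝ)
    (A B : Set S) : Prop :=
  ∀ᵐ p ∂(μ.prod μ), p.1 ∈ A → p.2 ∈ B → W p.1 p.2 = 1

/-- The collection `Z`: measurable sets `A` admitting a partition `{B, C}` of the
complement of `A` with `B ≺ A`, `A ≺ C` and `B ≺ C`. -/
def memZ {S : Type*} [MeasurableSpace S] (μ : Measure S) (W : S → S → ℝ)
    (A : Set S) : Prop :=
  MeasurableSet A ∧ ∃ B C : Set S, MeasurableSet B ∧ MeasurableSet C ∧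
    B ∪ C = Aᶜ ∧ B ∩ C = ∅ ∧ KPrec μ W B A ∧ KPrec μ W A C ∧ KPrec μ W B C

/-- `A` is an atom of the measure space `(S, m, μ)`. -/
def IsAtomOf {S : Type*} {m0 : MeasurableSpace S} (m : MeasurableSpace S)
    (μ : @MeasureTheory.Measure S m0) (A : Set S) : Prop :=
  MeasurableSet[m] A ∧ 0 < μ A ∧
    ¬ ∃ A' : Set S, MeasurableSet[m] A' ∧ A' ⊆ A ∧ 0 < μ A' ∧ μ A' < μ A


open Set
open scoped ENNReal

section Aux14

variable {S : Type*} [MeasurableSpace S] {μ : Measure S} [IsProbabilityMeasure μ]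
  {W : S → S → ℝ}

lemma fstNull {X : Set S} (hX : μ X = 0) : (μ.prod μ) {p : S × S | p.1 ∈ X} = 0 := by
  have h : {p : S × S | p.1 ∈ X} = X ×ˢ (univ : Set S) := by ext p; simp
  rw [h, Measure.prod_prod, hX, zero_mul]

lemma sndNull {X : Set S} (hX : μ X = 0) : (μ.prod μ) {p : S × S | p.2 ∈ X} = 0 := by
  have h : {p : S × S | p.2 ∈ X} = (univ : Set S) ×ˢ X := by ext p; simp
  rw [h, Measure.prod_prod, hX, mul_zero]

lemma KPrec.mono {X Y X' Y' : Set S} (h : KPrec μ W X Y) (hX : X' ⊆ X) (hY : Y' ⊆ Y) :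
    KPrec μ W X' Y' := by
  filter_upwards [h] with p hp h1 h2
  exact hp (hX h1) (hY h2)

lemma kprec_of_fst_null {X Y : Set S} (hX : μ X = 0) : KPrec μ W X Y := by
  rw [KPrec, ae_iff]
  refine measure_mono_null (fun p hp => ?_) (fstNull (μ := μ) hX)
  simp only [mem_setOf_eq, not_forall] at hp ⊢
  exact hp.1

lemma kprec_of_snd_null {X Y : Set S} (hY : μ Y = 0) : KPrec μ W X Y := by
  rw [KPrec, ae_iff]
  refine measure_mono_null (fun p hp => ?_) (sndNull (μ := μ) hY)
  simp only [mem_setOf_eq, not_forall] at hp ⊢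
  exact hp.2.1

lemma kprec_empty_fst {Y : Set S} : KPrec μ W ∅ Y :=
  Filter.Eventually.of_forall fun p h => absurd h (Set.notMem_empty _)

lemma kprec_empty_snd {X : Set S} : KPrec μ W X ∅ :=
  Filter.Eventually.of_forall fun p _ h => absurd h (Set.notMem_empty _)

lemma kprec_fst_ae {X X' Y : Set S} (hX : μ (X \ X') = 0) (h : KPrec μ W X' Y) :
    KPrec μ W X Y := by
  have h0 : ∀ᵐ p ∂(μ.prod μ), p.1 ∉ X \ X' := by
    rw [ae_iff]
    refine measure_mono_null (fun p hp => ?_) (fstNull (μ := μ) hX)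
    simpa using hp
  filter_upwards [h, h0] with p hp hp0 h1 h2
  exact hp (by by_contra hc; exact hp0 ⟨h1, hc⟩) h2

lemma kprec_snd_ae {X Y Y' : Set S} (hY : μ (Y \ Y') = 0) (h : KPrec μ W X Y') :
    KPrec μ W X Y := by
  have h0 : ∀ᵐ p ∂(μ.prod μ), p.2 ∉ Y \ Y' := by
    rw [ae_iff]
    refine measure_mono_null (fun p hp => ?_) (sndNull (μ := μ) hY)
    simpa using hp
  filter_upwards [h, h0] with p hp hp0 h1 h2
  exact hp h1 (by by_contra hc; exact hp0 ⟨h2, hc⟩)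

lemma kprec_union_fst {X X' Y : Set S} (h1 : KPrec μ W X Y) (h2 : KPrec μ W X' Y) :
    KPrec μ W (X ∪ X') Y := by
  filter_upwards [h1, h2] with p hp1 hp2 h1' h2'
  rcases h1' with h | h
  · exact hp1 h h2'
  · exact hp2 h h2'

lemma kprec_union_snd {X Y Y' : Set S} (h1 : KPrec μ W X Y) (h2 : KPrec μ W X Y') :
    KPrec μ W X (Y ∪ Y') := by
  filter_upwards [h1, h2] with p hp1 hp2 h1' h2'
  rcases h2' with h | h
  · exact hp1 h1' h
  · exact hp2 h1' h

lemma kprec_iUnion_fst {X : ℕ → Set S} {Y : Set S} (h : ∀ n, KPrec μ W (X n) Y) :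
    KPrec μ W (⋃ n, X n) Y := by
  filter_upwards [ae_all_iff.2 h] with p hp h1 h2
  obtain ⟨n, hn⟩ := mem_iUnion.1 h1
  exact hp n hn h2

lemma kprec_iUnion_snd {X : Set S} {Y : ℕ → Set S} (h : ∀ n, KPrec μ W X (Y n)) :
    KPrec μ W X (⋃ n, Y n) := by
  filter_upwards [ae_all_iff.2 h] with p hp h1 h2
  obtain ⟨n, hn⟩ := mem_iUnion.1 h2
  exact hp n h1 hn

lemma ae_swap' {P : S × S → Prop} (h : ∀ᵐ p ∂(μ.prod μ), P p) :
    ∀ᵐ p ∂(μ.prod μ), P p.swap := by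
  have hq : Measure.QuasiMeasurePreserving (Prod.swap : S × S → S × S) (μ.prod μ) (μ.prod μ) :=
    ⟨measurable_swap, by rw [Measure.prod_swap]⟩
  rw [ae_iff] at h ⊢
  exact hq.preimage_null h

lemma kprec_antisym (hsum : ∀ᵐ p ∂(μ.prod μ), W p.1 p.2 + W p.2 p.1 = 1) {X Y : Set S}
    (h1 : KPrec μ W X Y) (h2 : KPrec μ W Y X) : μ X * μ Y = 0 := by
  have h2' : ∀ᵐ p ∂(μ.prod μ), p.2 ∈ Y → p.1 ∈ X → W p.2 p.1 = 1 := ae_swap' h2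
  have key : ∀ᵐ p ∂(μ.prod μ), ¬(p.1 ∈ X ∧ p.2 ∈ Y) := by
    filter_upwards [h1, h2', hsum] with p hp hp' hs
    rintro ⟨hx, hy⟩
    have e1 := hp hx hy
    have e2 := hp' hy hx
    linarith
  rw [ae_iff] at key
  rw [← Measure.prod_prod (μ := μ) (ν := μ) X Y, ← key]
  congr 1
  ext p
  simp [Set.mem_prod]

lemma kprec_self_null (hsum : ∀ᵐ p ∂(μ.prod μ), W p.1 p.2 + W p.2 p.1 = 1) {X : Set S}
    (h : KPrec μ W X X) : μ X = 0 :=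
  mul_self_eq_zero.1 (kprec_antisym hsum h h)

lemma kprec_between_null (hsum : ∀ᵐ p ∂(μ.prod μ), W p.1 p.2 + W p.2 p.1 = 1)
    {A X : Set S} (hA : μ A ≠ 0) (h1 : KPrec μ W X A) (h2 : KPrec μ W A X) : μ X = 0 :=
  (mul_eq_zero.1 (kprec_antisym hsum h1 h2)).resolve_right hA

lemma memZ_empty : memZ μ W (∅ : Set S) :=
  ⟨.empty, ∅, univ, .empty, .univ, by simp, by simp,
    kprec_empty_fst, kprec_empty_fst, kprec_empty_fst⟩

lemma memZ_univ : memZ μ W (univ : Set S) :=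
  ⟨.univ, ∅, ∅, .empty, .empty, by simp, by simp,
    kprec_empty_fst, kprec_empty_snd, kprec_empty_fst⟩

lemma memZ_lower {C Bc Cc : Set S} (hCm : MeasurableSet C) (hBm : MeasurableSet Bc)
    (hCcm : MeasurableSet Cc) (hun : Bc ∪ Cc = Cᶜ) (hdis : Bc ∩ Cc = ∅)
    (h1 : KPrec μ W Bc C) (h2 : KPrec μ W C Cc) (h3 : KPrec μ W Bc Cc) :
    memZ μ W Bc := by
  refine ⟨hBm, ∅, C ∪ Cc, .empty, hCm.union hCcm, ?_, by simp, kprec_empty_fst,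
    kprec_union_snd h1 h3, kprec_empty_fst⟩
  ext x
  have e1 := Set.ext_iff.1 hun x
  have e2 := Set.ext_iff.1 hdis x
  simp only [mem_union, mem_compl_iff, mem_inter_iff, mem_empty_iff_false, iff_false,
    not_and] at e1 e2 ⊢
  tauto

lemma memZ_upper {C Bc Cc : Set S} (hCm : MeasurableSet C) (hBm : MeasurableSet Bc)
    (hCcm : MeasurableSet Cc) (hun : Bc ∪ Cc = Cᶜ) (hdis : Bc ∩ Cc = ∅)
    (h1 : KPrec μ W Bc C) (h2 : KPrec μ W C Cc) (h3 : KPrec μ W Bc Cc) :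
    memZ μ W Cc := by
  refine ⟨hCcm, Bc ∪ C, ∅, hBm.union hCm, .empty, ?_, by simp, kprec_union_fst h3 h2,
    kprec_empty_snd, kprec_empty_snd⟩
  ext x
  have e1 := Set.ext_iff.1 hun x
  have e2 := Set.ext_iff.1 hdis x
  simp only [mem_union, mem_compl_iff, mem_inter_iff, mem_empty_iff_false, iff_false,
    not_and] at e1 e2 ⊢
  tauto


variable {S : Type*} [MeasurableSpace S] {μ : Measure S} [IsProbabilityMeasure μ]

lemma exists_essInter {J : Set (Set S)} (hne : J.Nonempty)
    (hmeas : ∀ C ∈ J, MeasurableSet C) :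
    ∃ f : ℕ → Set S, (∀ n, f n ∈ J) ∧ ∀ C ∈ J, μ ((⋂ n, f n) \ C) = 0 := by
  classical
  set T : Set ℝ≥0∞ := {r | ∃ f : ℕ → Set S, (∀ n, f n ∈ J) ∧ μ (⋂ n, f n) = r} with hT
  obtain ⟨C0, hC0⟩ := hne
  have hTne : T.Nonempty := ⟨μ (⋂ _ : ℕ, C0), fun _ => C0, fun _ => hC0, rfl⟩
  set i := sInf T with hi
  have hitop : i ≠ ⊤ := by
    obtain ⟨r, hr⟩ := hTne
    exact (lt_of_le_of_lt (sInf_le hr) (by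
      obtain ⟨f, _, rfl⟩ := hr
      exact measure_lt_top μ _)).ne
  have hstep : ∀ k : ℕ, ∃ g : ℕ → Set S, (∀ n, g n ∈ J) ∧
      μ (⋂ n, g n) < i + ((k : ℝ≥0∞) + 1)⁻¹ := by
    intro k
    have hlt : i < i + ((k : ℝ≥0∞) + 1)⁻¹ :=
      ENNReal.lt_add_right hitop (by simp [ENNReal.inv_ne_zero])
    obtain ⟨r, hrT, hrlt⟩ := sInf_lt_iff.1 (hi ▸ hlt)
    obtain ⟨g, hg, rfl⟩ := hrT
    exact ⟨g, hg, hrlt⟩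
  choose g hgJ hglt using hstep
  set f : ℕ → Set S := fun m => g (Nat.unpair m).1 (Nat.unpair m).2 with hf
  have hfJ : ∀ n, f n ∈ J := fun n => hgJ _ _
  have hNsub : ∀ k, (⋂ n, f n) ⊆ ⋂ n, g k n := by
    intro k x hx
    rw [mem_iInter] at hx ⊢
    intro n
    have := hx (Nat.pair k n)
    simpa [hf, Nat.unpair_pair] using this
  have hNgei : i ≤ μ (⋂ n, f n) := sInf_le ⟨f, hfJ, rfl⟩
  have hNlei : μ (⋂ n, f n) ≤ i := by
    refine ENNReal.le_of_forall_pos_le_add fun ε hε _ => ?_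
    obtain ⟨k, hk⟩ := ENNReal.exists_inv_nat_lt (a := (ε : ℝ≥0∞)) (by exact_mod_cast hε.ne')
    calc μ (⋂ n, f n) ≤ μ (⋂ n, g k n) := measure_mono (hNsub k)
      _ ≤ i + ((k : ℝ≥0∞) + 1)⁻¹ := (hglt k).le
      _ ≤ i + (k : ℝ≥0∞)⁻¹ := by
          gcongr
          exact le_self_add
      _ ≤ i + ε := by gcongr
  have hNi : μ (⋂ n, f n) = i := le_antisymm hNlei hNgei
  refine ⟨f, hfJ, fun C hC => ?_⟩
  set f' : ℕ → Set S := fun m => if m = 0 then C else f (m - 1) with hf'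
  have hinter : (⋂ n, f' n) = (⋂ n, f n) ∩ C := by
    ext x
    simp only [mem_iInter, mem_inter_iff]
    constructor
    · intro h
      refine ⟨fun n => ?_, by simpa [hf'] using h 0⟩
      simpa [hf'] using h (n + 1)
    · rintro ⟨h1, h2⟩ n
      rcases Nat.eq_zero_or_pos n with rfl | hn
      · simpa [hf']
      · simp [hf', Nat.pos_iff_ne_zero.1 hn, h1]
  have hgei' : i ≤ μ ((⋂ n, f n) ∩ C) := by
    rw [← hinter]
    exact sInf_le ⟨f', fun n => by
      rcases Nat.eq_zero_or_pos n with rfl | hn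
      · simpa [hf'] using hC
      · simpa [hf', Nat.pos_iff_ne_zero.1 hn] using hfJ (n - 1), rfl⟩
  have hsplit := measure_inter_add_diff (μ := μ) (⋂ n, f n) (hmeas C hC)
  by_contra hne0
  have hlt : μ (⋂ n, f n) < μ ((⋂ n, f n) ∩ C) + μ ((⋂ n, f n) \ C) := by
    calc μ (⋂ n, f n) = i := hNi
      _ ≤ μ ((⋂ n, f n) ∩ C) := hgei'
      _ < μ ((⋂ n, f n) ∩ C) + μ ((⋂ n, f n) \ C) :=
          ENNReal.lt_add_right (measure_lt_top μ _).ne hne0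
  exact absurd hsplit hlt.ne'

lemma exists_essUnion {J : Set (Set S)} (hne : J.Nonempty)
    (hmeas : ∀ C ∈ J, MeasurableSet C) :
    ∃ f : ℕ → Set S, (∀ n, f n ∈ J) ∧ ∀ C ∈ J, μ (C \ ⋃ n, f n) = 0 := by
  obtain ⟨f, hfJ, hf⟩ := exists_essInter (μ := μ) (J := compl '' J)
    (hne.image _) (by rintro C ⟨D, hD, rfl⟩; exact (hmeas D hD).compl)
  refine ⟨fun n => (f n)ᶜ, fun n => ?_, fun C hC => ?_⟩
  · obtain ⟨D, hD, hDe⟩ := hfJ n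
    show (f n)ᶜ ∈ J
    rw [← hDe, compl_compl]
    exact hD
  · have := hf Cᶜ ⟨C, hC, rfl⟩
    refine measure_mono_null (fun x hx => ?_) this
    simp only [mem_diff, mem_iUnion, mem_iInter, mem_compl_iff, not_exists, not_not] at hx ⊢
    exact ⟨fun n => hx.2 n, hx.1⟩

lemma kprec_low_up {S : Type*} [MeasurableSpace S] {μ : Measure S} [IsProbabilityMeasure μ]
    {W : S → S → ℝ} (hsum : ∀ᵐ p ∂(μ.prod μ), W p.1 p.2 + W p.2 p.1 = 1)
    {A P Q : Set S} (hA0 : μ A ≠ 0)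
    (hdich : ∀ D : Set S, memZ μ W D → μ (A ∩ D) = 0 ∨ μ (A \ D) = 0)
    (hPA : KPrec μ W P A) (hQZ : memZ μ W Q) (hAQ : KPrec μ W A Q) :
    KPrec μ W P Q := by
  obtain ⟨hQm, Bq, Cq, hBqm, hCqm, hun, hdis, h1, h2, h3⟩ := hQZ
  have hBZ : memZ μ W Bq := memZ_lower hQm hBqm hCqm hun hdis h1 h2 h3
  rcases hdich Bq hBZ with h0 | h1'
  · have hAQ0 : μ (A ∩ Q) = 0 :=
      kprec_self_null hsum (hAQ.mono inter_subset_left inter_subset_right)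
    have hACq : μ (A \ Cq) = 0 := by
      refine measure_mono_null (fun x hx => ?_) (measure_union_null hAQ0 h0)
      rcases hx with ⟨hxA, hxC⟩
      by_cases hxq : x ∈ Q
      · exact Or.inl ⟨hxA, hxq⟩
      · have hmem : x ∈ Bq ∪ Cq := by rw [hun]; exact hxq
        rcases hmem with h | h
        · exact Or.inr ⟨hxA, h⟩
        · exact absurd h hxC
    have hQA : KPrec μ W Q A := kprec_snd_ae hACq h2
    have hQ0 : μ Q = 0 := kprec_between_null hsum hA0 hQA hAQ
    exact kprec_of_snd_null hQ0
  · have hACq : KPrec μ W A Cq := kprec_fst_ae h1' h3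
    have hPQ0 : μ (P ∩ Q) = 0 := kprec_between_null hsum hA0
      (hPA.mono inter_subset_left (subset_refl A))
      (hAQ.mono (subset_refl A) inter_subset_right)
    have hPCq0 : μ (P ∩ Cq) = 0 := kprec_between_null hsum hA0
      (hPA.mono inter_subset_left (subset_refl A))
      (hACq.mono (subset_refl A) inter_subset_right)
    have hPBq : μ (P \ Bq) = 0 := by
      refine measure_mono_null (fun x hx => ?_) (measure_union_null hPQ0 hPCq0)
      rcases hx with ⟨hxP, hxB⟩
      by_cases hxq : x ∈ Q
      · exact Or.inl ⟨hxP, hxq⟩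
      · have hmem : x ∈ Bq ∪ Cq := by rw [hun]; exact hxq
        rcases hmem with h | h
        · exact absurd h hxB
        · exact Or.inr ⟨hxP, h⟩
    exact kprec_fst_ae hPBq h1

end Aux14

/-- The restriction of a tournament kernel to an atom of `(S, σ(Z), μ)`, regarded as a
kernel on the normalized probability space on the atom, is irreducible: there is no
measurable `B ⊆ A` of strictly intermediate measure with `W = 1` a.e. on `B × (A \ B)`. -/
theorem stmt14 {S : Type*} [MeasurableSpace S] (μ : Measure S) [IsProbabilityMeasure μ]
    (W : S → S → ℝ) (hW : IsTournamentKernel μ W) (A : Set S)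
    (hA : IsAtomOf (MeasurableSpace.generateFrom {B : Set S | memZ μ W B}) μ A) :
    ¬ ∃ B : Set S, MeasurableSet B ∧ B ⊆ A ∧ 0 < μ B ∧ μ B < μ A ∧
      ∀ᵐ p ∂(μ.prod μ), p.1 ∈ B → p.2 ∈ A \ B → W p.1 p.2 = 1 := by
  classical
  rintro ⟨B, hBm, hBsub, hB0, hBlt, hBprec⟩
  obtain ⟨hWm, hWb, hWsum⟩ := hW
  obtain ⟨hAσ, hA0, hAatom⟩ := hA
  have hle : MeasurableSpace.generateFrom {B : Set S | memZ μ W B} ≤ ‹MeasurableSpace S› :=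
    MeasurableSpace.generateFrom_le fun C hC => hC.1
  have hAm : MeasurableSet A := hle _ hAσ
  have hA0' : μ A ≠ 0 := hA0.ne'
  have hdichm : ∀ D : Set S, MeasurableSet[MeasurableSpace.generateFrom {B : Set S | memZ μ W B}] D → μ (A ∩ D) = 0 ∨ μ (A \ D) = 0 := by
    intro D hD
    by_cases h0 : μ (A ∩ D) = 0
    · exact Or.inl h0
    right
    have hADσ : MeasurableSet[MeasurableSpace.generateFrom {B : Set S | memZ μ W B}] (A ∩ D) := hAσ.inter hD
    have hnotlt : ¬ μ (A ∩ D) < μ A := fun hlt =>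
      hAatom ⟨A ∩ D, hADσ, inter_subset_left, pos_iff_ne_zero.2 h0, hlt⟩
    have heq : μ (A ∩ D) = μ A :=
      le_antisymm (measure_mono inter_subset_left) (not_lt.1 hnotlt)
    have hsplit := measure_inter_add_diff (μ := μ) A (hle _ hD)
    rw [heq] at hsplit
    by_contra hne0
    exact absurd hsplit (ENNReal.lt_add_right (measure_lt_top μ _).ne hne0).ne'
  have hdich : ∀ D : Set S, memZ μ W D → μ (A ∩ D) = 0 ∨ μ (A \ D) = 0 := fun D hD =>
    hdichm D (MeasurableSpace.measurableSet_generateFrom hD)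
  have hclass0 : ∀ C : Set S, memZ μ W C → μ (A ∩ C) = 0 →
      (KPrec μ W C A ∨ KPrec μ W A C) := by
    intro C hC hAC
    obtain ⟨hCm, Bc, Cc, hBcm, hCcm, hun, hdis, h1, h2, h3⟩ := hC
    have hBZ : memZ μ W Bc := memZ_lower hCm hBcm hCcm hun hdis h1 h2 h3
    rcases hdich Bc hBZ with h0 | h1'
    · left
      have hACc : μ (A \ Cc) = 0 := by
        refine measure_mono_null (fun x hx => ?_) (measure_union_null hAC h0)
        rcases hx with ⟨hxA, hxC⟩
        by_cases hxc : x ∈ C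
        · exact Or.inl ⟨hxA, hxc⟩
        · have hmem : x ∈ Bc ∪ Cc := by rw [hun]; exact hxc
          rcases hmem with h | h
          · exact Or.inr ⟨hxA, h⟩
          · exact absurd h hxC
      exact kprec_snd_ae hACc h2
    · right
      exact kprec_fst_ae h1' h1
  have hclass1 : ∀ C : Set S, memZ μ W C → μ (A \ C) = 0 →
      ∃ P Q : Set S, memZ μ W P ∧ memZ μ W Q ∧ KPrec μ W P A ∧ KPrec μ W A Q ∧
        P ∪ Q = Cᶜ := by
    intro C hC hAC
    obtain ⟨hCm, Bc, Cc, hBcm, hCcm, hun, hdis, h1, h2, h3⟩ := hC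
    exact ⟨Bc, Cc, memZ_lower hCm hBcm hCcm hun hdis h1 h2 h3,
      memZ_upper hCm hBcm hCcm hun hdis h1 h2 h3,
      kprec_snd_ae hAC h1, kprec_fst_ae hAC h2, hun⟩
  obtain ⟨f1, hf1mem, hf1inf⟩ := exists_essInter (μ := μ)
    (J := {C : Set S | memZ μ W C ∧ μ (A \ C) = 0})
    ⟨Set.univ, memZ_univ, by simp⟩ (fun C hC => hC.1.1)
  obtain ⟨f0, hf0mem, hf0sup⟩ := exists_essUnion (μ := μ)
    (J := {C : Set S | memZ μ W C ∧ μ (A ∩ C) = 0})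
    ⟨∅, memZ_empty, by simp⟩ (fun C hC => hC.1.1)
  set N : Set S := ⋂ n, f1 n with hN
  set L0 : Set S := ⋃ n, f0 n with hL0
  have hAN : μ (A \ N) = 0 := by
    have he : A \ N = ⋃ n, A \ f1 n := by
      ext x
      simp only [hN, Set.mem_diff, Set.mem_iInter, Set.mem_iUnion, not_forall]
      tauto
    rw [he]
    exact measure_iUnion_null fun n => (hf1mem n).2
  have hAL0 : μ (A ∩ L0) = 0 := by
    have he : A ∩ L0 = ⋃ n, A ∩ f0 n := by
      ext x
      simp only [hL0, Set.mem_inter_iff, Set.mem_iUnion]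
      tauto
    rw [he]
    exact measure_iUnion_null fun n => (hf0mem n).2
  set K : Set S := N \ L0 with hK
  have hKA : μ (K \ A) = 0 := by
    have hind : ∀ D : Set S, MeasurableSet[MeasurableSpace.generateFrom {B : Set S | memZ μ W B}] D → (μ (K ∩ D) = 0 ∨ μ (K \ D) = 0) := by
      intro D hD
      induction D, hD using MeasurableSpace.generateFrom_induction with
      | hC t ht _ =>
        rcases hdich t ht with h0 | h1
        · left
          refine measure_mono_null (fun x hx => ?_) (hf0sup t ⟨ht, h0⟩)
          exact ⟨hx.2, hx.1.2⟩
        · right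
          refine measure_mono_null (fun x hx => ?_) (hf1inf t ⟨ht, h1⟩)
          exact ⟨hx.1.1, hx.2⟩
      | empty => left; simp
      | compl t ht ih =>
        rcases ih with h | h
        · right
          rw [Set.diff_compl]
          exact h
        · left
          rw [← Set.diff_eq]
          exact h
      | iUnion s hs ih =>
        by_cases hall : ∀ n, μ (K ∩ s n) = 0
        · left
          rw [Set.inter_iUnion]
          exact measure_iUnion_null hall
        · right
          push_neg at hall
          obtain ⟨n, hn⟩ := hall
          rcases ih n with h | h
          · exact absurd h hn
          · exact measure_mono_null (Set.diff_subset_diff_right (Set.subset_iUnion s n)) h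
    rcases hind A hAσ with h | h
    · exfalso
      have hAK : μ (A \ K) = 0 := by
        refine measure_mono_null (fun x hx => ?_) (measure_union_null hAN hAL0)
        rcases hx with ⟨hxA, hxK⟩
        by_cases hxN : x ∈ N
        · exact Or.inr ⟨hxA, by_contra fun hl => hxK ⟨hxN, hl⟩⟩
        · exact Or.inl ⟨hxA, hxN⟩
      have hle1 : μ A ≤ μ (A ∩ K) + μ (A \ K) := by
        calc μ A ≤ μ ((A ∩ K) ∪ (A \ K)) := by
              refine measure_mono fun x hx => ?_
              by_cases hxK : x ∈ K
              · exact Or.inl ⟨hx, hxK⟩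
              · exact Or.inr ⟨hx, hxK⟩
          _ ≤ μ (A ∩ K) + μ (A \ K) := measure_union_le _ _
      rw [Set.inter_comm] at h
      rw [h, hAK, add_zero] at hle1
      exact absurd (le_antisymm hle1 zero_le) hA0'
    · exact h
  choose P Q hPZ hQZ hPA hAQ hPQun using fun n => hclass1 (f1 n) (hf1mem n).1 (hf1mem n).2
  set P' : ℕ → Set S := fun n => if KPrec μ W (f0 n) A then f0 n else ∅ with hP'
  set Q' : ℕ → Set S := fun n => if KPrec μ W (f0 n) A then ∅ else f0 n with hQ'
  have hP'Z : ∀ n, memZ μ W (P' n) := by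
    intro n
    by_cases h : KPrec μ W (f0 n) A
    · simpa [hP', h] using (hf0mem n).1
    · simpa [hP', h] using memZ_empty (μ := μ) (W := W)
  have hP'A : ∀ n, KPrec μ W (P' n) A := by
    intro n
    by_cases h : KPrec μ W (f0 n) A
    · simpa [hP', h] using h
    · simpa [hP', h] using kprec_empty_fst (μ := μ) (W := W) (Y := A)
  have hQ'Z : ∀ n, memZ μ W (Q' n) := by
    intro n
    by_cases h : KPrec μ W (f0 n) A
    · simpa [hQ', h] using memZ_empty (μ := μ) (W := W)
    · simpa [hQ', h] using (hf0mem n).1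
  have hAQ' : ∀ n, KPrec μ W A (Q' n) := by
    intro n
    by_cases h : KPrec μ W (f0 n) A
    · simpa [hQ', h] using kprec_empty_snd (μ := μ) (W := W) (X := A)
    · simpa [hQ', h] using (hclass0 (f0 n) (hf0mem n).1 (hf0mem n).2).resolve_left h
  have hf0cov : ∀ n, f0 n ⊆ P' n ∪ Q' n := by
    intro n x hx
    by_cases h : KPrec μ W (f0 n) A
    · left; simpa [hP', h] using hx
    · right; simpa [hQ', h] using hx
  set L : Set S := (⋃ n, P n) ∪ (⋃ n, P' n) with hL
  set U : Set S := (⋃ n, Q n) ∪ (⋃ n, Q' n) with hU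
  have hLm : MeasurableSet L :=
    (MeasurableSet.iUnion fun n => (hPZ n).1).union (MeasurableSet.iUnion fun n => (hP'Z n).1)
  have hLA : KPrec μ W L A :=
    kprec_union_fst (kprec_iUnion_fst hPA) (kprec_iUnion_fst hP'A)
  have hAU : KPrec μ W A U :=
    kprec_union_snd (kprec_iUnion_snd hAQ) (kprec_iUnion_snd hAQ')
  have hLU : KPrec μ W L U := by
    have pair : ∀ X : Set S, KPrec μ W X A → KPrec μ W X U := by
      intro X hX
      refine kprec_union_snd (kprec_iUnion_snd fun n => ?_) (kprec_iUnion_snd fun n => ?_)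
      · exact kprec_low_up hWsum hA0' hdich hX (hQZ n) (hAQ n)
      · exact kprec_low_up hWsum hA0' hdich hX (hQ'Z n) (hAQ' n)
    exact kprec_union_fst (kprec_iUnion_fst fun n => pair _ (hPA n))
      (kprec_iUnion_fst fun n => pair _ (hP'A n))
  have hcov : μ (Aᶜ \ (L ∪ U)) = 0 := by
    refine measure_mono_null (fun x hx => ?_) hKA
    rcases hx with ⟨hxA, hxLU⟩
    refine ⟨⟨?_, fun hxL0 => ?_⟩, hxA⟩
    · rw [hN, Set.mem_iInter]
      intro n
      by_contra hxf
      have hmem : x ∈ P n ∪ Q n := by rw [hPQun n]; exact hxf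
      rcases hmem with h | h
      · exact hxLU (Or.inl (Or.inl (Set.mem_iUnion.2 ⟨n, h⟩)))
      · exact hxLU (Or.inr (Or.inl (Set.mem_iUnion.2 ⟨n, h⟩)))
    · obtain ⟨n, hn⟩ := Set.mem_iUnion.1 hxL0
      rcases hf0cov n hn with h | h
      · exact hxLU (Or.inl (Or.inr (Set.mem_iUnion.2 ⟨n, h⟩)))
      · exact hxLU (Or.inr (Or.inr (Set.mem_iUnion.2 ⟨n, h⟩)))
  set D : Set S := B ∪ (L \ A) with hD
  have hDm : MeasurableSet D := hBm.union (hLm.diff hAm)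
  have hcovae : ∀ᵐ p ∂(μ.prod μ), p.2 ∉ Aᶜ \ (L ∪ U) := by
    rw [ae_iff]
    refine measure_mono_null (fun p hp => ?_) (sndNull (μ := μ) hcov)
    simpa using hp
  have hmain : KPrec μ W D Dᶜ := by
    filter_upwards [hBprec, hLA, hAU, hLU, hcovae] with p h1 h2 h3 h4 h5 hx hy
    have hyB : p.2 ∉ B := fun hb => hy (Or.inl hb)
    have hyL : p.2 ∉ L \ A := fun hb => hy (Or.inr hb)
    rcases hx with hxB | hxL
    · by_cases hyA : p.2 ∈ A
      · exact h1 hxB ⟨hyA, hyB⟩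
      · have hyU : p.2 ∈ U := by
          by_contra hUc
          exact h5 ⟨hyA, fun hLU' => hLU'.elim (fun hl => hyL ⟨hl, hyA⟩) hUc⟩
        exact h3 (hBsub hxB) hyU
    · by_cases hyA : p.2 ∈ A
      · exact h2 hxL.1 hyA
      · have hyU : p.2 ∈ U := by
          by_contra hUc
          exact h5 ⟨hyA, fun hLU' => hLU'.elim (fun hl => hyL ⟨hl, hyA⟩) hUc⟩
        exact h4 hxL.1 hyU
  have hDZ : memZ μ W D :=
    ⟨hDm, ∅, Dᶜ, .empty, hDm.compl, by simp, by simp, kprec_empty_fst, hmain, kprec_empty_fst⟩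
  have hDσ : MeasurableSet[MeasurableSpace.generateFrom {B : Set S | memZ μ W B}] D := MeasurableSpace.measurableSet_generateFrom hDZ
  have hBD : B = D ∩ A := by
    ext x
    constructor
    · intro hx
      exact ⟨Or.inl hx, hBsub hx⟩
    · rintro ⟨hx | hx, hxA⟩
      · exact hx
      · exact absurd hxA hx.2
  have hBσ : MeasurableSet[MeasurableSpace.generateFrom {B : Set S | memZ μ W B}] B := by
    rw [hBD]
    exact hDσ.inter hAσ
  exact hAatom ⟨B, hBσ, hBsub, hB0, hBlt⟩
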